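/- Let λ = (λ_1,…,λ_k) be a nonnegative rate vector, let ρ_1,…,ρ_q ≥ 0 with Σ_{i=1}^q ρ_i = 1, let t ≥ 0, and let n_1,…,n_q ∈ ℕ₀. Then Σ_{Θ} ∏_{j=1}^{k} ( ( (Σ_{i=1}^q x^{(i)}_j)! / ∏_{i=1}^q x^{(i)}_j! ) · ∏_{i=1}^q ρ_i^{x^{(i)}_j} · (λ_j t)^{Σ_i x^{(i)}_j} / (Σ_i x^{(i)}_j)! · e^{−λ_j t} ) = ∏_{i=1}^{q} p(ρ_i λ; n_i, t), where Θ = {(x^{(1)},…,x^{(q)}) ∈ (ℕ₀^k)^q : Σ_{j=1}^k j·x^{(i)}_j = n_i for every i}, and ρ_i λ = (ρ_i λ_1,…,ρ_i λ_k). In words: when each jump of a GCP is routed to the i-th of q split components with probability ρ_i by independent rolls of a q-faced die, the split components are independent GCPs with rates ρ_i λ_j. -/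

import Mathlib

open Finset

/-- The set `Ω(k, n)` of tuples `x : Fin k → ℕ` with `∑_{j=1}^k j * x_j = n`
(`j : Fin k` represents the jump size `j + 1`). -/
def gcpOmega (k n : ℕ) : Finset (Fin k → ℕ) :=
  (Fintype.piFinset fun _ : Fin k => Finset.range (n + 1)).filter
    fun x => ∑ j : Fin k, (j.1 + 1) * x j = n

/-- The probability mass function of the generalized counting process with jump
rates `lam j` for jumps of size `j + 1`, evaluated at state `n` and time `t`. -/
noncomputable def gcpPMF (k : ℕ) (lam : Fin k → ℝ) (n : ℕ) (t : ℝ) : ℝ :=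
  ∑ x ∈ gcpOmega k n,
    ∏ j : Fin k, (lam j * t) ^ (x j) / (Nat.factorial (x j)) * Real.exp (-(lam j * t))


/-- When each jump of a GCP with rates `lam` is routed to the `i`-th of `q` split
components with probability `ρ i` by independent rolls of a `q`-faced die, the split
components are independent GCPs with rates `ρ_i λ_j`: the joint law factorizes. -/
theorem type_I_splitting_q_components (k : ℕ) (hk : 1 ≤ k) (q : ℕ) (hq : 1 ≤ q)
    (lam : Fin k → ℝ) (hlam : ∀ j, 0 ≤ lam j)
    (ρ : Fin q → ℝ) (hρ : ∀ i, 0 ≤ ρ i) (hρsum : ∑ i : Fin q, ρ i = 1)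
    (t : ℝ) (ht : 0 ≤ t) (n : Fin q → ℕ) :
    ∑ x ∈ (Fintype.piFinset fun i : Fin q =>
        Fintype.piFinset fun _ : Fin k => Finset.range (n i + 1)).filter
        (fun x => ∀ i : Fin q, ∑ j : Fin k, (j.1 + 1) * x i j = n i),
      ∏ j : Fin k,
        ((Nat.factorial (∑ i : Fin q, x i j) : ℝ) /
            (∏ i : Fin q, (Nat.factorial (x i j) : ℝ)) *
          (∏ i : Fin q, ρ i ^ (x i j)) *
          (lam j * t) ^ (∑ i : Fin q, x i j) / (Nat.factorial (∑ i : Fin q, x i j)) *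
          Real.exp (-(lam j * t)))
      = ∏ i : Fin q, gcpPMF k (fun j => ρ i * lam j) (n i) t := by
  have hset : (Fintype.piFinset fun i : Fin q =>
        Fintype.piFinset fun _ : Fin k => Finset.range (n i + 1)).filter
        (fun x => ∀ i : Fin q, ∑ j : Fin k, (j.1 + 1) * x i j = n i)
      = Fintype.piFinset fun i : Fin q => gcpOmega k (n i) := by
    ext x
    simp only [Finset.mem_filter, Fintype.mem_piFinset, gcpOmega, forall_and]
  rw [hset]
  simp only [gcpPMF]
  rw [Finset.prod_univ_sum]
  apply Finset.sum_congr rfl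
  intro x hx
  rw [Finset.prod_comm]
  apply Finset.prod_congr rfl
  intro j _
  have hexp : ∏ i : Fin q, Real.exp (-(ρ i * lam j * t)) = Real.exp (-(lam j * t)) := by
    rw [← Real.exp_sum]
    congr 1
    rw [Finset.sum_neg_distrib]
    congr 1
    simp_rw [mul_assoc]
    rw [← Finset.sum_mul, hρsum, one_mul]
  have hpow : ∏ i : Fin q, (ρ i * lam j * t) ^ (x i j)
      = (∏ i : Fin q, ρ i ^ (x i j)) * (lam j * t) ^ (∑ i : Fin q, x i j) := by
    simp_rw [mul_assoc, mul_pow]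
    rw [Finset.prod_mul_distrib, Finset.prod_mul_distrib, Finset.prod_pow_eq_pow_sum,
      Finset.prod_pow_eq_pow_sum]
  have hS : ((Nat.factorial (∑ i : Fin q, x i j) : ℝ)) ≠ 0 := by
    exact_mod_cast (Nat.factorial_pos _).ne'
  have hF : (∏ i : Fin q, (Nat.factorial (x i j) : ℝ)) ≠ 0 := by
    apply Finset.prod_ne_zero_iff.mpr
    intro i _
    exact_mod_cast (Nat.factorial_pos _).ne'
  simp only [mul_div_assoc]
  rw [Finset.prod_mul_distrib, hexp, Finset.prod_div_distrib, hpow]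
  field_simp
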